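/- Let H and G be real Hilbert spaces, A: H ⇉ H and B: G ⇉ G maximal monotone operators, and G: H → G a bounded linear operator. Suppose a^k ∈ A(r^k) and b^k ∈ B(s^k) for all k, r^k ⇀ r^∞ weakly, b^k ⇀ b^∞ weakly, a^k + G*b^k → 0 strongly, and G r^k − s^k → 0 strongly. Then b^∞ ∈ B(G r^∞) and −G* b^∞ ∈ A(r^∞). -/

import Mathlib

open Filter RealInnerProductSpace

/-- A set-valued operator `A` on a real Hilbert space is maximal monotone. -/
def IsMaximalMonotone {H : Type*} [NormedAddCommGroup H] [InnerProductSpace ℝ H]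
    (A : H → Set H) : Prop :=
  (∀ x y u v, u ∈ A x → v ∈ A y → (0 : ℝ) ≤ ⟪u - v, x - y⟫) ∧
  (∀ x u, (∀ y v, v ∈ A y → (0 : ℝ) ≤ ⟪u - v, x - y⟫) → u ∈ A x)

/-- A weakly convergent sequence in a Hilbert space is norm-bounded. -/
lemma weak_bdd_aux {H : Type*} [NormedAddCommGroup H] [InnerProductSpace ℝ H] [CompleteSpace H]
    (x : ℕ → H) (xi : H)
    (h : ∀ y : H, Tendsto (fun k => ⟪x k, y⟫) atTop (nhds ⟪xi, y⟫)) :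
    ∃ M : ℝ, ∀ k, ‖x k‖ ≤ M := by
  obtain ⟨C, hC⟩ := banach_steinhaus (g := fun k => innerSL ℝ (x k)) (fun y => by
    obtain ⟨c, hc⟩ := ((h y).norm).bddAbove_range
    exact ⟨c, fun k => hc ⟨k, rfl⟩⟩)
  exact ⟨C, fun k => by simpa [innerSL_apply_norm] using hC k⟩

theorem stmt12 {H G : Type*}
    [NormedAddCommGroup H] [InnerProductSpace ℝ H] [CompleteSpace H]
    [NormedAddCommGroup G] [InnerProductSpace ℝ G] [CompleteSpace G]
    (A : H → Set H) (B : G → Set G)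
    (hA : IsMaximalMonotone A) (hB : IsMaximalMonotone B)
    (T : H →L[ℝ] G)
    (a r : ℕ → H) (b s : ℕ → G) (rinf : H) (binf : G)
    (ha : ∀ k, a k ∈ A (r k)) (hb : ∀ k, b k ∈ B (s k))
    (hr : ∀ y : H, Tendsto (fun k => ⟪r k, y⟫) atTop (nhds ⟪rinf, y⟫))
    (hbw : ∀ y : G, Tendsto (fun k => ⟪b k, y⟫) atTop (nhds ⟪binf, y⟫))
    (hsum : Tendsto (fun k => ‖a k + (ContinuousLinearMap.adjoint T) (b k)‖) atTop (nhds 0))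
    (hGr : Tendsto (fun k => ‖T (r k) - s k‖) atTop (nhds 0)) :
    binf ∈ B (T rinf) ∧ -(ContinuousLinearMap.adjoint T) binf ∈ A rinf := by
  set T' := ContinuousLinearMap.adjoint T with hT'
  obtain ⟨Mr, hMr⟩ := weak_bdd_aux r rinf hr
  obtain ⟨Mb, hMb⟩ := weak_bdd_aux b binf hbw
  have key : ∀ x u, u ∈ A x → ∀ y v, v ∈ B y →
      (0:ℝ) ≤ ⟪-T' binf - u, rinf - x⟫ + ⟪binf - v, T rinf - y⟫ := by
    intro x u hu y v hv
    have hF : ∀ k, (0:ℝ) ≤ ⟪a k - u, r k - x⟫ + ⟪b k - v, s k - y⟫ :=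
      fun k => add_nonneg (hA.1 _ _ _ _ (ha k) hu) (hB.1 _ _ _ _ (hb k) hv)
    have hid : ∀ k, ⟪a k - u, r k - x⟫ + ⟪b k - v, s k - y⟫ =
        ⟪a k + T' (b k), r k - x⟫ + ⟪b k, T x - y⟫ - ⟪b k, T (r k) - s k⟫
        - ⟪u, r k - x⟫ - (⟪v, s k - T (r k)⟫ + ⟪v, T (r k)⟫ - ⟪v, y⟫) := by
      intro k
      simp only [inner_add_left, inner_sub_left, inner_sub_right, hT',
        ContinuousLinearMap.adjoint_inner_left]
      ring
    -- limits of the pieces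
    have h1 : Tendsto (fun k => ⟪a k + T' (b k), r k - x⟫) atTop (nhds 0) := by
      apply squeeze_zero_norm (a := fun k => ‖a k + T' (b k)‖ * (Mr + ‖x‖))
      · intro k
        calc ‖⟪a k + T' (b k), r k - x⟫‖ ≤ ‖a k + T' (b k)‖ * ‖r k - x‖ :=
              norm_inner_le_norm _ _
          _ ≤ ‖a k + T' (b k)‖ * (Mr + ‖x‖) := by
              apply mul_le_mul_of_nonneg_left _ (norm_nonneg _)
              exact (norm_sub_le _ _).trans (add_le_add (hMr k) le_rfl)
      · simpa using hsum.mul_const (Mr + ‖x‖)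
    have h2 : Tendsto (fun k => ⟪b k, T x - y⟫) atTop (nhds ⟪binf, T x - y⟫) :=
      hbw (T x - y)
    have h3 : Tendsto (fun k => ⟪b k, T (r k) - s k⟫) atTop (nhds 0) := by
      apply squeeze_zero_norm (a := fun k => Mb * ‖T (r k) - s k‖)
      · intro k
        calc ‖⟪b k, T (r k) - s k⟫‖ ≤ ‖b k‖ * ‖T (r k) - s k‖ := norm_inner_le_norm _ _
          _ ≤ Mb * ‖T (r k) - s k‖ := mul_le_mul_of_nonneg_right (hMb k) (norm_nonneg _)
      · simpa using hGr.const_mul Mb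
    have h4 : Tendsto (fun k => ⟪u, r k - x⟫) atTop (nhds ⟪u, rinf - x⟫) := by
      have := (hr u).sub_const ⟪u, x⟫
      refine Tendsto.congr (fun k => ?_) (by
        convert this using 2
        rw [inner_sub_right, real_inner_comm])
      rw [inner_sub_right, real_inner_comm]
    have h5 : Tendsto (fun k => ⟪v, s k - T (r k)⟫) atTop (nhds 0) := by
      apply squeeze_zero_norm (a := fun k => ‖v‖ * ‖T (r k) - s k‖)
      · intro k
        calc ‖⟪v, s k - T (r k)⟫‖ ≤ ‖v‖ * ‖s k - T (r k)‖ := norm_inner_le_norm _ _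
          _ = ‖v‖ * ‖T (r k) - s k‖ := by rw [norm_sub_rev]
      · simpa using hGr.const_mul ‖v‖
    have h6 : Tendsto (fun k => ⟪v, T (r k)⟫) atTop (nhds ⟪v, T rinf⟫) := by
      have := hr (T' v)
      refine Tendsto.congr (fun k => ?_) (by
        convert this using 2
        rw [hT', ContinuousLinearMap.adjoint_inner_right, real_inner_comm])
      rw [hT', ContinuousLinearMap.adjoint_inner_right, real_inner_comm]
    have hfull : Tendsto (fun k => ⟪a k - u, r k - x⟫ + ⟪b k - v, s k - y⟫) atTop
        (nhds (0 + ⟪binf, T x - y⟫ - 0 - ⟪u, rinf - x⟫ - (0 + ⟪v, T rinf⟫ - ⟪v, y⟫))) := by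
      refine Tendsto.congr (fun k => (hid k).symm) ?_
      exact (((h1.add h2).sub h3).sub h4).sub ((h5.add h6).sub_const ⟪v, y⟫)
    have hlim : (0:ℝ) ≤ 0 + ⟪binf, T x - y⟫ - 0 - ⟪u, rinf - x⟫ - (0 + ⟪v, T rinf⟫ - ⟪v, y⟫) :=
      ge_of_tendsto' hfull hF
    calc (0:ℝ) ≤ _ := hlim
      _ = ⟪-T' binf - u, rinf - x⟫ + ⟪binf - v, T rinf - y⟫ := by
        simp only [inner_sub_left, inner_sub_right, inner_neg_left, hT',
          ContinuousLinearMap.adjoint_inner_left]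
        ring
  have hBmem : binf ∈ B (T rinf) := by
    apply hB.2
    intro y v hv
    by_contra hneg
    push_neg at hneg
    have hAmem : -T' binf ∈ A rinf := by
      apply hA.2
      intro x u hu
      have := key x u hu y v hv
      linarith
    have := key rinf (-T' binf) hAmem y v hv
    simp only [sub_self, inner_zero_right, zero_add] at this
    linarith
  refine ⟨hBmem, hA.2 _ _ fun x u hu => ?_⟩
  have := key x u hu (T rinf) binf hBmem
  simpa using this
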